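/- Let Q_smo(U) = tr(Uᵀ D̃^{-1/2} L̃ D̃^{-1/2} U) and Q_igc(U) = tr(Uᵀ ¬D̃^{-1/2}(¬D̃ − ¬Ã)¬D̃^{-1/2} U), and Q_ggc = (Q_smo + Q_igc)/2. Then the gradient descent step on Q_ggc with learning rates η_smo = η_igc = 1/2 equals the average (U_smo + U_igc)/2 of the graph convolution output U_smo = D̃^{-1/2} Ã D̃^{-1/2} U and the IGC output U_igc = ¬D̃^{-1/2} ¬Ã ¬D̃^{-1/2} U. -/

import Mathlib

open Matrix BigOperators

theorem stmt14 (n d : ℕ)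
    (A : Matrix (Fin n) (Fin n) ℝ)
    (hsymA : A.IsSymm) (h01A : ∀ i j, A i j = 0 ∨ A i j = 1)
    (At Dt Dh : Matrix (Fin n) (Fin n) ℝ)
    (hAt : At = A + 1)
    (hDt : Dt = Matrix.diagonal (fun i => ∑ j, At i j))
    (hDh : Dh = Matrix.diagonal (fun i => 1 / Real.sqrt (∑ j, At i j)))
    (B : Matrix (Fin n) (Fin n) ℝ)
    (hsymB : B.IsSymm) (h01B : ∀ i j, B i j = 0 ∨ B i j = 1) (hdiagB : ∀ i, B i i = 0)
    (degB : Fin n → ℝ) (hdegB : ∀ i, degB i = ∑ j, B i j)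
    (Bt Et Eh : Matrix (Fin n) (Fin n) ℝ)
    (hBt : Bt = (2 : ℝ) • (1 : Matrix (Fin n) (Fin n) ℝ) - B)
    (hEt : Et = (2 : ℝ) • (1 : Matrix (Fin n) (Fin n) ℝ) + Matrix.diagonal degB)
    (hEh : Eh = Matrix.diagonal (fun i => 1 / Real.sqrt (degB i + 2)))
    (U : Matrix (Fin n) (Fin d) ℝ) :
    U - ((1 / 2 : ℝ) * (1 / 2)) • ((2 : ℝ) • (Dh * (Dt - At) * Dh * U))
      - ((1 / 2 : ℝ) * (1 / 2)) • ((2 : ℝ) • (Eh * (Et - Bt) * Eh * U)) =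
      (1 / 2 : ℝ) • (Dh * At * Dh * U + Eh * Bt * Eh * U) := by
  have hdpos : ∀ i, (0:ℝ) < ∑ j, At i j := by
    intro i
    have h1 : ∑ j, At i j = (∑ j, A i j) + 1 := by
      simp [hAt, Matrix.add_apply, Finset.sum_add_distrib, Matrix.one_apply]
    have h2 : (0:ℝ) ≤ ∑ j, A i j :=
      Finset.sum_nonneg fun j _ => by rcases h01A i j with h | h <;> simp [h]
    linarith
  have hepos : ∀ i, (0:ℝ) < degB i + 2 := by
    intro i
    have h2 : (0:ℝ) ≤ degB i := by
      rw [hdegB]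
      exact Finset.sum_nonneg fun j _ => by rcases h01B i j with h | h <;> simp [h]
    linarith
  have hEt' : Et = Matrix.diagonal (fun i => degB i + 2) := by
    rw [hEt]
    ext i j
    by_cases h : i = j <;>
      simp [Matrix.diagonal, Matrix.add_apply, Matrix.one_apply, Matrix.smul_apply, h, add_comm]
  have scalar : ∀ s : ℝ, 0 < s → (1 / Real.sqrt s) * s * (1 / Real.sqrt s) = 1 := by
    intro s hp
    have hs : Real.sqrt s ≠ 0 := (Real.sqrt_pos.mpr hp).ne'
    field_simp
    rw [Real.sq_sqrt hp.le]
  have key1 : Dh * Dt * Dh = 1 := by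
    rw [hDh, hDt, Matrix.diagonal_mul_diagonal, Matrix.diagonal_mul_diagonal,
      show (1 : Matrix (Fin n) (Fin n) ℝ) = Matrix.diagonal (fun _ => 1) from (Matrix.diagonal_one).symm]
    exact congrArg Matrix.diagonal (funext fun i => scalar _ (hdpos i))
  have key2 : Eh * Et * Eh = 1 := by
    rw [hEh, hEt', Matrix.diagonal_mul_diagonal, Matrix.diagonal_mul_diagonal,
      show (1 : Matrix (Fin n) (Fin n) ℝ) = Matrix.diagonal (fun _ => 1) from (Matrix.diagonal_one).symm]
    exact congrArg Matrix.diagonal (funext fun i => scalar _ (hepos i))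
  have e1 : Dh * (Dt - At) * Dh * U = U - Dh * At * Dh * U := by
    rw [Matrix.mul_sub, Matrix.sub_mul, Matrix.sub_mul, key1, Matrix.one_mul]
  have e2 : Eh * (Et - Bt) * Eh * U = U - Eh * Bt * Eh * U := by
    rw [Matrix.mul_sub, Matrix.sub_mul, Matrix.sub_mul, key2, Matrix.one_mul]
  rw [e1, e2]
  rw [smul_smul, smul_smul]
  norm_num
  module
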